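/- Let ν ∈ ℂ with Re ν > 0 and let t ∈ ℝ with t > 0. Then ∫₀^∞ e^(−x²/2 − (x+t)²/2) · x^(ν−1) · (x+t)^(ν−1) dx = (1/2) · (t/2)^(2ν−1) · ∫₀^∞ e^(−(t²/4)·(u+2)) · u^(ν−1) · (1+u)^(−1/2) du. (This is the intermediate identity (42): the left-hand side equals (Γ(ν)/2)·(t/2)^(2ν−1)·e^(−t²/2)·Ψ(ν, ν+1/2; t²/4), proved by the substitution x = (t/2)(√(u+1) − 1).) -/
import Mathlib


open MeasureTheory Complex Set

/-- Intermediate identity (42): `∫₀^∞ e^(-x²/2-(x+t)²/2) x^(ν-1) (x+t)^(ν-1) dx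
= (1/2)(t/2)^(2ν-1) ∫₀^∞ e^(-(t²/4)(u+2)) u^(ν-1) (1+u)^(-1/2) du`, i.e. the left-hand
side equals `(Γ(ν)/2)(t/2)^(2ν-1) e^(-t²/2) Ψ(ν, ν+1/2; t²/4)`. -/
theorem convolution_kernel_psi_identity
    (ν : ℂ) (hν : 0 < ν.re) (t : ℝ) (ht : 0 < t) :
    (∫ x in Ioi (0:ℝ),
        Complex.exp (-(x:ℂ)^2 / 2 - ((x + t : ℝ) : ℂ)^2 / 2) *
          (x:ℂ) ^ (ν - 1) * ((x + t : ℝ) : ℂ) ^ (ν - 1)) =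
      (1/2 : ℂ) * ((t/2 : ℝ) : ℂ) ^ (2 * ν - 1) *
        ∫ u in Ioi (0:ℝ),
          Complex.exp (-((t:ℂ)^2 / 4) * ((u:ℂ) + 2)) * (u:ℂ) ^ (ν - 1) *
            ((1:ℂ) + (u:ℂ)) ^ (-(1:ℂ)/2) := by
  have ht2 : (0:ℝ) < t/2 := by linarith
  set f : ℝ → ℝ := fun u => t/2 * (Real.sqrt (u+1) - 1) with hf
  -- image
  have himg : f '' Ioi 0 = Ioi 0 := by
    ext x
    constructor
    · rintro ⟨u, hu, rfl⟩
      have hu' : (0:ℝ) < u := hu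
      have h1 : (1:ℝ) < Real.sqrt (u+1) := by
        nlinarith [Real.sq_sqrt (by linarith : (0:ℝ) ≤ u + 1),
          Real.sqrt_nonneg (u+1)]
      have : 0 < Real.sqrt (u+1) - 1 := by linarith
      simp only [hf, mem_Ioi]
      positivity
    · intro hx
      have hx' : (0:ℝ) < x := hx
      refine ⟨(2*x/t + 1)^2 - 1, ?_, ?_⟩
      · have h1 : (1:ℝ) < 2*x/t + 1 := by
          have : 0 < 2*x/t := by positivity
          linarith
        simp only [mem_Ioi]
        nlinarith
      · have h0 : (0:ℝ) ≤ 2*x/t + 1 := by positivity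
        have : Real.sqrt (((2*x/t + 1)^2 - 1) + 1) = 2*x/t + 1 := by
          rw [show ((2*x/t + 1)^2 - 1) + 1 = (2*x/t + 1)^2 by ring]
          exact Real.sqrt_sq h0
        simp only [hf, this]
        field_simp
        ring
  -- derivative
  have hderiv : ∀ u ∈ Ioi (0:ℝ),
      HasDerivWithinAt f (t / (4 * Real.sqrt (u+1))) (Ioi 0) u := by
    intro u hu
    have hu' : (0:ℝ) < u := hu
    have hpos : (0:ℝ) < u + 1 := by linarith
    have hs : 0 < Real.sqrt (u+1) := Real.sqrt_pos.mpr hpos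
    have h1 : HasDerivAt (fun v : ℝ => v + 1) 1 u := (hasDerivAt_id u).add_const 1
    have h2 : HasDerivAt Real.sqrt (1/(2*Real.sqrt (u+1))) (u+1) :=
      Real.hasDerivAt_sqrt (ne_of_gt hpos)
    have h3 : HasDerivAt (fun v : ℝ => Real.sqrt (v+1)) (1/(2*Real.sqrt (u+1)) * 1) u :=
      h2.comp u h1
    have h4 : HasDerivAt f (t/2 * (1/(2*Real.sqrt (u+1)) * 1)) u :=
      ((h3.sub_const 1).const_mul (t/2))
    have : t/2 * (1/(2*Real.sqrt (u+1)) * 1) = t / (4 * Real.sqrt (u+1)) := by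
      rw [mul_one, div_mul_div_comm]
      ring_nf
    rw [this] at h4
    exact h4.hasDerivWithinAt
  -- injectivity
  have hinj : InjOn f (Ioi 0) := by
    have hmono : StrictMonoOn f (Ioi 0) := by
      intro a ha b hb hab
      have : Real.sqrt (a+1) < Real.sqrt (b+1) :=
        Real.sqrt_lt_sqrt (by simp at ha; linarith) (by linarith)
      simp only [hf]
      nlinarith
    exact hmono.injOn
  conv_lhs => rw [← himg]
  rw [integral_image_eq_integral_abs_deriv_smul measurableSet_Ioi hderiv hinj,
    ← MeasureTheory.integral_const_mul]
  apply setIntegral_congr_fun measurableSet_Ioi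
  intro u hu
  have hu' : (0:ℝ) < u := hu
  have hpos : (0:ℝ) < u + 1 := by linarith
  have hs0 : 0 < Real.sqrt (u+1) := Real.sqrt_pos.mpr hpos
  have hssq : Real.sqrt (u+1) ^ 2 = u + 1 := Real.sq_sqrt hpos.le
  have hs1 : 1 < Real.sqrt (u+1) := by nlinarith [Real.sqrt_nonneg (u+1)]
  have hx0 : 0 < f u := by simp only [hf]; nlinarith
  have hxt : 0 < f u + t := by linarith
  have hsne : ((Real.sqrt (u+1) : ℝ) : ℂ) ≠ 0 := by
    simpa using ne_of_gt hs0
  have htc : ((t/2 : ℝ):ℂ) ≠ 0 := by simpa using ne_of_gt ht2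
  -- exponential part
  have hre : -(f u)^2/2 - (f u + t)^2/2 = -(t^2/4) * (u+2) := by
    simp only [hf]; linear_combination (-(t^2/4)) * hssq
  have hexp : Complex.exp (-((f u : ℝ):ℂ)^2 / 2 - ((f u + t : ℝ):ℂ)^2 / 2)
      = Complex.exp (-((t:ℂ)^2/4) * ((u:ℂ) + 2)) := by
    congr 1
    rw [show -((f u : ℝ):ℂ)^2/2 - ((f u + t : ℝ):ℂ)^2/2
        = (((-(f u)^2/2 - (f u + t)^2/2 : ℝ)):ℂ) by push_cast; ring, hre]
    push_cast; ring
  -- power part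
  have hmul : f u * (f u + t) = t/2 * (t/2 * u) := by
    simp only [hf]; linear_combination (t^2/4) * hssq
  have hpow : ((f u : ℝ):ℂ) ^ (ν - 1) * ((f u + t : ℝ) : ℂ) ^ (ν - 1)
      = ((t/2 : ℝ):ℂ) ^ (ν - 1) * (((t/2 : ℝ):ℂ) ^ (ν - 1) * ((u:ℝ):ℂ) ^ (ν - 1)) := by
    rw [← Complex.mul_cpow_ofReal_nonneg hx0.le hxt.le, ← Complex.ofReal_mul, hmul,
      show ((t/2 * (t/2*u) : ℝ):ℂ) = ((t/2:ℝ):ℂ) * ((t/2*u : ℝ):ℂ) by push_cast; ring,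
      Complex.mul_cpow_ofReal_nonneg ht2.le (by positivity : (0:ℝ) ≤ t/2*u),
      show ((t/2*u : ℝ):ℂ) = ((t/2:ℝ):ℂ) * ((u:ℝ):ℂ) by push_cast; ring,
      Complex.mul_cpow_ofReal_nonneg ht2.le hu'.le]
  -- (1+u)^(-1/2)
  have hinv : ((1:ℂ) + (u:ℂ)) ^ (-(1:ℂ)/2) = (((Real.sqrt (u+1))⁻¹ : ℝ) : ℂ) := by
    have h1 : ((1:ℂ) + (u:ℂ)) = ((1 + u : ℝ) : ℂ) := by push_cast; ring
    have h2 : (-(1:ℂ)/2) = (((-1/2 : ℝ)) : ℂ) := by push_cast; ring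
    rw [h1, h2, ← Complex.ofReal_cpow (by linarith : (0:ℝ) ≤ 1 + u)]
    congr 1
    rw [show (-1/2 : ℝ) = -(1/2) by ring, Real.rpow_neg (by linarith : (0:ℝ) ≤ 1 + u),
      ← Real.sqrt_eq_rpow, show (1:ℝ) + u = u + 1 by ring]
  -- cpow split of (t/2)^(2ν-1)
  have hsplit : ((t/2 : ℝ):ℂ) ^ (2*ν - 1)
      = ((t/2 : ℝ):ℂ) ^ (ν - 1) * ((t/2 : ℝ):ℂ) ^ (ν - 1) * ((t/2 : ℝ):ℂ) := by
    rw [show (2*ν - 1 : ℂ) = (ν - 1) + ((ν - 1) + 1) by ring,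
      Complex.cpow_add _ _ htc, Complex.cpow_add _ _ htc, Complex.cpow_one]
    ring
  dsimp only
  rw [Complex.real_smul,
    abs_of_pos (by positivity : 0 < t / (4 * Real.sqrt (u+1))), hexp,
    mul_assoc (Complex.exp _), hpow, hinv, hsplit]
  push_cast
  field_simp
  ring
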